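/- Let S be a nonempty finite set with uniform probabilities, Q : S → ℝ, and α ∈ (0,1). For the sample-average CVaR objective g(u) = u + (1/((1−α)|S|))·∑_{s∈S} max(Q(s) − u, 0), any u* ∈ ℝ maximizing the empirical α-quantile condition, in particular u* = Q(s*) where s* achieves the ⌈α|S|⌉-th order statistic, satisfies g(u*) = min_u g(u). -/
import Mathlib


/-- Discrete Rockafellar–Uryasev minimization: with `S` equally likely scenarios and
costs `Q`, if `u* = Q s*` is an empirical `α`-quantile of the scenario costs (i.e. the
`⌈α|S|⌉`-th order statistic, characterized by
`#{s : Q s ≤ Q s*} ≥ α|S|` and `#{s : Q s < Q s*} < α|S|`), then `u*` minimizes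
`g u = u + (1/((1−α)|S|))·∑_s max(Q s − u, 0)`. -/
theorem empirical_var_minimizes_ru {S : Type*} [Fintype S] [Nonempty S]
    (Q : S → ℝ) (α : ℝ) (hα : α ∈ Set.Ioo (0 : ℝ) 1)
    (g : ℝ → ℝ)
    (hg : ∀ u, g u = u + (1 / ((1 - α) * (Fintype.card S : ℝ))) * ∑ s : S, max (Q s - u) 0)
    (sstar : S)
    (h1 : α * (Fintype.card S : ℝ) ≤ ((Finset.univ.filter fun s => Q s ≤ Q sstar).card : ℝ))
    (h2 : ((Finset.univ.filter fun s => Q s < Q sstar).card : ℝ) < α * (Fintype.card S : ℝ)) :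
    ∀ u : ℝ, g (Q sstar) ≤ g u := by
  obtain ⟨hα0, hα1⟩ := hα
  intro u
  rw [hg, hg]
  set N : ℝ := (Fintype.card S : ℝ) with hNdef
  have hN : 0 < N := by
    have := Fintype.card_pos (α := S)
    rw [hNdef]; exact_mod_cast this
  have h1α : (0:ℝ) < 1 - α := by linarith
  set c : ℝ := 1 / ((1 - α) * N) with hc
  have hcpos : 0 < c := by positivity
  have hcN : c * ((1 - α) * N) = 1 := by
    rw [hc]; field_simp
  set t := Q sstar with ht
  rcases le_or_gt t u with hut | hut
  · -- u ≥ t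
    set A : ℝ := ((Finset.univ.filter fun s => Q s ≤ t).card : ℝ) with hA
    have hcard : ((Finset.univ.filter fun s => Q s ≤ t).card : ℝ)
        + ((Finset.univ.filter fun s => ¬ Q s ≤ t).card : ℝ) = N := by
      rw [hNdef]
      exact_mod_cast congrArg (Nat.cast : ℕ → ℝ)
        (Finset.card_filter_add_card_filter_not (s := Finset.univ)
          (p := fun s => Q s ≤ t))
    have key : ∑ s : S, (max (Q s - t) 0 - max (Q s - u) 0)
        ≤ ∑ s : S, (if Q s ≤ t then (0:ℝ) else (u - t)) := by
      apply Finset.sum_le_sum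
      intro s _
      by_cases h : Q s ≤ t
      · simp only [h, if_true]
        have h1' : max (Q s - t) 0 = 0 := max_eq_right (by linarith)
        have h2' : max (Q s - u) 0 = 0 := max_eq_right (by linarith)
        rw [h1', h2']; norm_num
      · simp only [h, if_false]
        push_neg at h
        have h1' : max (Q s - t) 0 = Q s - t := max_eq_left (by linarith)
        have h2' : Q s - u ≤ max (Q s - u) 0 := le_max_left _ _
        rw [h1']; linarith
    have hsum : ∑ s : S, (if Q s ≤ t then (0:ℝ) else (u - t))
        = ((Finset.univ.filter fun s => ¬ Q s ≤ t).card : ℝ) * (u - t) := by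
      rw [Finset.sum_ite, Finset.sum_const, Finset.sum_const]
      simp [nsmul_eq_mul]
    rw [hsum] at key
    rw [Finset.sum_sub_distrib] at key
    have hNA : ((Finset.univ.filter fun s => ¬ Q s ≤ t).card : ℝ) = N - A := by
      rw [hA]; linarith
    rw [hNA] at key
    -- c * (N - A) ≤ 1
    have hfrac : c * (N - A) ≤ 1 := by
      have hle : N - A ≤ (1 - α) * N := by rw [hA]; nlinarith [h1]
      calc c * (N - A) ≤ c * ((1 - α) * N) := by
            exact mul_le_mul_of_nonneg_left hle hcpos.le
        _ = 1 := hcN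
    nlinarith [mul_le_mul_of_nonneg_left key hcpos.le,
      mul_le_mul_of_nonneg_right hfrac (by linarith : (0:ℝ) ≤ u - t),
      mul_nonneg hcpos.le (sub_nonneg.mpr hut)]
  · -- u < t
    set B : ℝ := ((Finset.univ.filter fun s => Q s < t).card : ℝ) with hB
    have hcard : ((Finset.univ.filter fun s => Q s < t).card : ℝ)
        + ((Finset.univ.filter fun s => ¬ Q s < t).card : ℝ) = N := by
      rw [hNdef]
      exact_mod_cast congrArg (Nat.cast : ℕ → ℝ)
        (Finset.card_filter_add_card_filter_not (s := Finset.univ)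
          (p := fun s => Q s < t))
    have key : ∑ s : S, (max (Q s - t) 0 - max (Q s - u) 0)
        ≤ ∑ s : S, (if Q s < t then (0:ℝ) else (u - t)) := by
      apply Finset.sum_le_sum
      intro s _
      by_cases h : Q s < t
      · simp only [h, if_true]
        have h1' : max (Q s - t) 0 = 0 := max_eq_right (by linarith)
        have h2' : (0:ℝ) ≤ max (Q s - u) 0 := le_max_right _ _
        rw [h1']; linarith
      · simp only [h, if_false]
        push_neg at h
        have h1' : max (Q s - t) 0 = Q s - t := max_eq_left (by linarith)
        have h2' : max (Q s - u) 0 = Q s - u := max_eq_left (by linarith)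
        rw [h1', h2']; linarith
    have hsum : ∑ s : S, (if Q s < t then (0:ℝ) else (u - t))
        = ((Finset.univ.filter fun s => ¬ Q s < t).card : ℝ) * (u - t) := by
      rw [Finset.sum_ite, Finset.sum_const, Finset.sum_const]
      simp [nsmul_eq_mul]
    rw [hsum] at key
    rw [Finset.sum_sub_distrib] at key
    have hNB : ((Finset.univ.filter fun s => ¬ Q s < t).card : ℝ) = N - B := by
      rw [hB]; linarith
    rw [hNB] at key
    have hfrac : 1 ≤ c * (N - B) := by
      have hle : (1 - α) * N ≤ N - B := by rw [hB]; nlinarith [h2]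
      calc (1:ℝ) = c * ((1 - α) * N) := hcN.symm
        _ ≤ c * (N - B) := mul_le_mul_of_nonneg_left hle hcpos.le
    nlinarith [mul_le_mul_of_nonneg_left key hcpos.le,
      mul_le_mul_of_nonneg_right hfrac (by linarith : (0:ℝ) ≤ t - u)]
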